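/- For the symmetrized top to bottom-k shuffle q̃_{n,k} = (1/2)(q_{n,k} + q_{n,k}*) on S_n with 2 ≤ k ≤ n, the smallest eigenvalue of its Markov operator satisfies β_min ≥ −1 + (k−1)/(k(n−k+2)(n+1)). -/

import Mathlib

/-- `β` is an eigenvalue of the Markov operator `Qf(x) = Σ_y f(xy) q(y)` of `q`. -/
def IsEig {G : Type*} [Fintype G] [Group G] (q : G → ℝ) (β : ℝ) : Prop :=
  ∃ f : G → ℝ, f ≠ 0 ∧ ∀ x, ∑ y, f (x * y) * q y = β * f x

/-- The top to bottom-`k` measure on `S_n`: uniform on the cycles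
`σ_l = (1,2,…,l)` for `n − k + 1 ≤ l ≤ n` (here `0`-indexed via `Fin.cycleRange i`
with `n − k ≤ i`). -/
noncomputable def topToBottom (n k : ℕ) : Equiv.Perm (Fin n) → ℝ := fun σ =>
  if ∃ i : Fin n, n - k ≤ (i : ℕ) ∧ σ = Fin.cycleRange i then 1 / k else 0

open Finset

section Helpers

variable {G : Type*} [Fintype G] [Group G]

/-- Right translation is a sum bijection. -/
lemma stmt9_sum_mul_right (g : G) (h : G → ℝ) : ∑ x : G, h (x * g) = ∑ x : G, h x :=
  Fintype.sum_equiv (Equiv.mulRight g) _ _ (fun _ => rfl)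

/-- Telescoping identity along the cyclic word `y^c = 1` of odd length. -/
lemma stmt9_telescope (f : G → ℝ) (y : G) (c : ℕ) (hc : Odd c) (hyc : y ^ c = 1) (x : G) :
    2 * f x = ∑ j ∈ range c, ((-1:ℝ)^j * (f (x * y ^ j) + f (x * y ^ (j+1)))) := by
  have key : ∀ j ∈ range c, ((-1:ℝ)^j * (f (x * y ^ j) + f (x * y ^ (j+1))))
      = (fun j => (-1:ℝ)^j * f (x * y ^ j)) j - (fun j => (-1:ℝ)^j * f (x * y ^ j)) (j+1) := by
    intro j _
    simp only [pow_succ]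
    ring
  rw [Finset.sum_congr rfl key, Finset.sum_range_sub']
  simp only [pow_zero, one_mul, mul_one, hyc, hc.neg_one_pow]
  ring

/-- The key single-generator inequality:
`4‖f‖² ≤ c² ∑ₓ (f x + f (xy))²` whenever `y^c = 1` with `c` odd. -/
lemma stmt9_T_ge (f : G → ℝ) (y : G) (c : ℕ) (hc : Odd c) (hy : y ^ c = 1) :
    4 * (∑ x : G, f x ^ 2) ≤ (c:ℝ)^2 * ∑ x : G, (f x + f (x * y))^2 := by
  have hstep : ∀ x : G,
      4 * f x ^ 2 ≤ (c:ℝ) * ∑ j ∈ range c, (f (x * y ^ j) + f (x * y ^ (j+1)))^2 := by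
    intro x
    have h2 := stmt9_telescope f y c hc hy x
    have hCS := sq_sum_le_card_mul_sum_sq
      (s := range c) (f := fun j => ((-1:ℝ)^j * (f (x * y ^ j) + f (x * y ^ (j+1)))))
    rw [← h2] at hCS
    have hsq : ∀ j ∈ range c, ((-1:ℝ)^j * (f (x * y ^ j) + f (x * y ^ (j+1))))^2
        = (f (x * y ^ j) + f (x * y ^ (j+1)))^2 := by
      intro j _
      rw [mul_pow, ← pow_mul, mul_comm j 2, pow_mul]
      norm_num
    rw [Finset.sum_congr rfl hsq, Finset.card_range] at hCS
    calc 4 * f x ^ 2 = (2 * f x)^2 := by ring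
    _ ≤ _ := hCS
  calc 4 * (∑ x : G, f x ^ 2) = ∑ x : G, 4 * f x ^ 2 := by rw [Finset.mul_sum]
  _ ≤ ∑ x : G, (c:ℝ) * ∑ j ∈ range c, (f (x * y ^ j) + f (x * y ^ (j+1)))^2 :=
      Finset.sum_le_sum (fun x _ => hstep x)
  _ = (c:ℝ) * ∑ j ∈ range c, ∑ x : G, (f (x * y ^ j) + f (x * y ^ (j+1)))^2 := by
      rw [← Finset.mul_sum, Finset.sum_comm]
  _ = (c:ℝ) * ∑ j ∈ range c, ∑ x : G, (f x + f (x * y))^2 := by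
      congr 1
      refine Finset.sum_congr rfl (fun j _ => ?_)
      have := stmt9_sum_mul_right (G := G) (y ^ j) (fun u => (f u + f (u * y))^2)
      rw [← this]
      refine Finset.sum_congr rfl (fun x _ => ?_)
      rw [show x * y ^ (j+1) = x * y ^ j * y by rw [pow_succ, ← mul_assoc]]
  _ = (c:ℝ)^2 * ∑ x : G, (f x + f (x * y))^2 := by
      rw [Finset.sum_const, Finset.card_range, nsmul_eq_mul]
      ring

end Helpers

/-- `cycleRange i` has order dividing `i+1`. -/
lemma stmt9_cycleRange_pow_eq_one {n : ℕ} (i : Fin (n+1)) :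
    (Fin.cycleRange i) ^ ((i:ℕ) + 1) = 1 := by
  rcases eq_or_ne i 0 with rfl | h0
  · simp
  · have h := Equiv.Perm.lcm_cycleType (Fin.cycleRange i)
    rw [Fin.cycleType_cycleRange h0, Multiset.lcm_singleton, normalize_eq] at h
    rw [h]
    exact pow_orderOf_eq_one _

/-- Sum of `1/c²` over odd `c` in `[a, a+L)` is at least `(1/(a+1) - 1/(a+L))/2`. -/
lemma stmt9_oddsum : ∀ (L a : ℕ), 1 ≤ a →
    ((1:ℝ)/(a+1) - 1/(a+L))/2 ≤
      ∑ c ∈ (Finset.Ico a (a+L)).filter (fun c => Odd c), 1/(c:ℝ)^2 := by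
  intro L
  induction L using Nat.strong_induction_on with
  | _ L IH =>
    intro a ha
    match L, IH with
    | 0, _ =>
      simp only [add_zero, Finset.Ico_self, Finset.filter_empty, Finset.sum_empty]
      have ha0 : (1:ℝ) ≤ (a:ℝ) := by exact_mod_cast ha
      have h := one_div_le_one_div_of_le (show (0:ℝ) < a by linarith)
        (by linarith : (a:ℝ) ≤ a+1)
      push_cast
      norm_num
      simp only [one_div] at h
      linarith
    | 1, _ =>
      have h0 : ((1:ℝ)/(a+1) - 1/(a+1))/2 = 0 := by ring
      push_cast
      rw [h0]
      apply Finset.sum_nonneg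
      intro c _
      positivity
    | (L+2), IH =>
      have hsplit : Finset.Ico a (a+(L+2)) = Finset.Ico a (a+2) ∪ Finset.Ico (a+2) (a+(L+2)) := by
        rw [Finset.Ico_union_Ico_eq_Ico] <;> omega
      have hdisj : Disjoint (Finset.Ico a (a+2)) (Finset.Ico (a+2) (a+(L+2))) :=
        Finset.Ico_disjoint_Ico_consecutive _ _ _
      rw [hsplit, Finset.filter_union, Finset.sum_union (Finset.disjoint_filter_filter hdisj)]
      have h2 := IH L (by omega) (a+2) (by omega)
      have hIco2 : Finset.Ico a (a+2) = {a, a+1} := by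
        ext x
        simp only [Finset.mem_Ico, Finset.mem_insert, Finset.mem_singleton]
        omega
      have h1 : ((1:ℝ)/(a+1) - 1/(a+3))/2 ≤
          ∑ c ∈ (Finset.Ico a (a+2)).filter (fun c => Odd c), 1/(c:ℝ)^2 := by
        have haux : ∀ o : ℕ, 1 ≤ o → o ≤ a + 1 → ((1:ℝ)/(a+1) - 1/(a+3))/2 ≤ 1/(o:ℝ)^2 := by
          intro o h1o h2o
          have ho : (1:ℝ) ≤ (o:ℝ) := by exact_mod_cast h1o
          have ho2 : (o:ℝ) ≤ (a:ℝ)+1 := by exact_mod_cast h2o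
          have ha0 : (0:ℝ) < a := by
            have : (1:ℝ) ≤ (a:ℝ) := by exact_mod_cast ha
            linarith
          rw [div_sub_div _ _ (by positivity) (by positivity), div_div]
          rw [div_le_div_iff₀ (by positivity) (by positivity)]
          nlinarith
        rw [hIco2]
        rcases Nat.even_or_odd a with he | ho
        · have hfil : ({a, a+1} : Finset ℕ).filter (fun c => Odd c) = {a+1} := by
            rw [Finset.filter_insert, Finset.filter_singleton,
              if_neg (by simp [Nat.not_odd_iff_even.mpr he]), if_pos (Even.add_one he)]
          rw [hfil, Finset.sum_singleton]
          exact haux (a+1) (by omega) (le_refl _)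
        · have hfil : ({a, a+1} : Finset ℕ).filter (fun c => Odd c) = {a} := by
            rw [Finset.filter_insert, Finset.filter_singleton,
              if_pos ho, if_neg (by simp [Nat.not_odd_iff_even.mpr (Odd.add_one ho)])]
            rfl
          rw [hfil, Finset.sum_singleton]
          exact haux a (by omega) (by omega)
      have hre : a + (L+2) = (a+2) + L := by omega
      rw [hre]
      push_cast at h1 h2 ⊢
      have e1 : ((a:ℝ)+2+1) = (a:ℝ)+3 := by ring
      have e2 : ((a:ℝ)+2+(L:ℝ)) = (a:ℝ)+((L:ℝ)+2) := by ring
      rw [e1, e2] at h2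
      linarith

/-- the smallest eigenvalue of the symmetrized top to bottom-`k`
shuffle `q̃_{n,k} = (1/2)(q_{n,k} + q_{n,k}*)` satisfies
`β_min ≥ −1 + (k−1)/(k(n−k+2)(n+1))`. -/
theorem stmt9 (n k : ℕ) (hk2 : 2 ≤ k) (hkn : k ≤ n)
    (qt : Equiv.Perm (Fin n) → ℝ)
    (hqt : ∀ σ, qt σ = (topToBottom n k σ + topToBottom n k σ⁻¹) / 2)
    (β : ℝ) (hβ : IsEig qt β) :
    -1 + ((k : ℝ) - 1) / (k * ((n : ℝ) - k + 2) * ((n : ℝ) + 1)) ≤ β := by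
  obtain ⟨N, rfl⟩ : ∃ N, n = N + 1 := ⟨n - 1, by omega⟩
  obtain ⟨f, hf0, heig⟩ := hβ
  set tb : Equiv.Perm (Fin (N+1)) → ℝ := topToBottom (N+1) k with htbdef
  set nf : ℝ := ∑ x : Equiv.Perm (Fin (N+1)), f x ^ 2 with hnfdef
  set T : Equiv.Perm (Fin (N+1)) → ℝ :=
    fun y => ∑ x : Equiv.Perm (Fin (N+1)), (f x + f (x * y))^2 with hTdef
  have hk0 : (0:ℝ) < k := by
    have : 0 < k := by omega
    exact_mod_cast this
  have hnfpos : 0 < nf := by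
    rcases Function.ne_iff.mp hf0 with ⟨x0, hx0⟩
    have hx0' : f x0 ≠ 0 := hx0
    have h1 : (0:ℝ) < f x0 ^ 2 := pow_two_pos_of_ne_zero hx0'
    refine lt_of_lt_of_le h1 ?_
    exact Finset.single_le_sum (f := fun x => f x ^ 2) (fun x _ => by positivity) (mem_univ x0)
  have hT_nonneg : ∀ y, 0 ≤ T y := fun y =>
    Finset.sum_nonneg (fun x _ => by positivity)
  have htb_nonneg : ∀ y, 0 ≤ tb y := by
    intro y
    rw [htbdef]
    unfold topToBottom
    split <;> positivity
  have hqt_nonneg : ∀ y, 0 ≤ qt y := by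
    intro y
    rw [hqt y]
    linarith [htb_nonneg y, htb_nonneg y⁻¹]
  have hTinv : ∀ y, T y⁻¹ = T y := by
    intro y
    rw [hTdef]
    simp only
    rw [← stmt9_sum_mul_right (G := Equiv.Perm (Fin (N+1))) y
      (fun u => (f u + f (u * y⁻¹))^2)]
    refine Finset.sum_congr rfl (fun x _ => ?_)
    rw [mul_assoc, mul_inv_cancel, mul_one]
    ring
  set Qs : ℝ := ∑ y : Equiv.Perm (Fin (N+1)), qt y with hQsdef
  have hTexp : ∀ y, T y = 2*nf + 2 * ∑ x : Equiv.Perm (Fin (N+1)), f x * f (x*y) := by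
    intro y
    rw [hTdef]
    simp only
    have hptw : ∀ x : Equiv.Perm (Fin (N+1)),
        (f x + f (x*y))^2 = f x ^2 + 2*(f x * f (x*y)) + f (x*y)^2 := by
      intro x; ring
    rw [Finset.sum_congr rfl (fun x _ => hptw x), Finset.sum_add_distrib,
      Finset.sum_add_distrib, ← Finset.mul_sum,
      stmt9_sum_mul_right (G := Equiv.Perm (Fin (N+1))) y (fun u => f u ^ 2)]
    rw [hnfdef]
    ring
  have hkey : ∑ y : Equiv.Perm (Fin (N+1)), qt y * T y = 2 * nf * (β + Qs) := by
    have hA : ∑ y : Equiv.Perm (Fin (N+1)), qt y * ∑ x : Equiv.Perm (Fin (N+1)),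
        f x * f (x*y) = β * nf := by
      calc ∑ y : Equiv.Perm (Fin (N+1)), qt y * ∑ x : Equiv.Perm (Fin (N+1)), f x * f (x*y)
          = ∑ y : Equiv.Perm (Fin (N+1)), ∑ x : Equiv.Perm (Fin (N+1)),
            f x * (f (x*y) * qt y) := by
            refine Finset.sum_congr rfl (fun y _ => ?_)
            rw [Finset.mul_sum]
            exact Finset.sum_congr rfl (fun x _ => by ring)
      _ = ∑ x : Equiv.Perm (Fin (N+1)), ∑ y : Equiv.Perm (Fin (N+1)),
            f x * (f (x*y) * qt y) := Finset.sum_comm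
      _ = ∑ x : Equiv.Perm (Fin (N+1)), f x * (β * f x) := by
            refine Finset.sum_congr rfl (fun x _ => ?_)
            rw [← Finset.mul_sum, heig x]
      _ = β * nf := by
            rw [hnfdef, Finset.mul_sum]
            exact Finset.sum_congr rfl (fun x _ => by ring)
    calc ∑ y : Equiv.Perm (Fin (N+1)), qt y * T y
        = ∑ y : Equiv.Perm (Fin (N+1)), (qt y * (2*nf)
            + 2 * (qt y * ∑ x : Equiv.Perm (Fin (N+1)), f x * f (x*y))) := by
          refine Finset.sum_congr rfl (fun y _ => ?_)
          rw [hTexp y]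
          ring
    _ = (∑ y : Equiv.Perm (Fin (N+1)), qt y) * (2*nf)
          + 2 * ∑ y : Equiv.Perm (Fin (N+1)), qt y * ∑ x : Equiv.Perm (Fin (N+1)),
            f x * f (x*y) := by
          rw [Finset.sum_add_distrib, ← Finset.sum_mul, ← Finset.mul_sum]
    _ = Qs * (2*nf) + 2 * (β * nf) := by rw [← hQsdef, hA]
    _ = 2 * nf * (β + Qs) := by ring
  have hQs1 : Qs ≤ 1 := by
    have hinv : ∑ y : Equiv.Perm (Fin (N+1)), tb y⁻¹ = ∑ y : Equiv.Perm (Fin (N+1)), tb y :=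
      Fintype.sum_equiv (Equiv.inv (Equiv.Perm (Fin (N+1)))) _ _ (fun y => rfl)
    have hQtb : Qs = ∑ y : Equiv.Perm (Fin (N+1)), tb y := by
      rw [hQsdef, Finset.sum_congr rfl (fun y _ => hqt y)]
      rw [show (∑ y : Equiv.Perm (Fin (N+1)), (tb y + tb y⁻¹)/2)
          = ((∑ y : Equiv.Perm (Fin (N+1)), tb y)
            + (∑ y : Equiv.Perm (Fin (N+1)), tb y⁻¹))/2 by
        rw [← Finset.sum_add_distrib, ← Finset.sum_div]]
      rw [hinv]
      ring
    rw [hQtb]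
    have hsum : ∑ y : Equiv.Perm (Fin (N+1)), tb y
        = ((univ.filter (fun σ : Equiv.Perm (Fin (N+1)) =>
            ∃ i : Fin (N+1), N + 1 - k ≤ (i : ℕ)
            ∧ σ = Fin.cycleRange i)).card : ℝ) * (1/k) := by
      rw [htbdef]
      unfold topToBottom
      rw [← Finset.sum_filter, Finset.sum_const, nsmul_eq_mul]
    rw [hsum]
    have hcard : (univ.filter (fun σ : Equiv.Perm (Fin (N+1)) =>
        ∃ i : Fin (N+1), N + 1 - k ≤ (i : ℕ)
        ∧ σ = Fin.cycleRange i)).card ≤ k := by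
      have hsub : (univ.filter (fun σ : Equiv.Perm (Fin (N+1)) =>
          ∃ i : Fin (N+1), N + 1 - k ≤ (i : ℕ) ∧ σ = Fin.cycleRange i))
          ⊆ Finset.image (fun i : Fin (N+1) => Fin.cycleRange i)
            (univ.filter (fun i : Fin (N+1) => N + 1 - k ≤ (i:ℕ))) := by
        intro σ hσ
        obtain ⟨-, i, hi, hσi⟩ := Finset.mem_filter.mp hσ
        exact Finset.mem_image.mpr ⟨i, Finset.mem_filter.mpr ⟨mem_univ _, hi⟩, hσi.symm⟩
      refine le_trans (Finset.card_le_card hsub) (le_trans Finset.card_image_le ?_)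
      have hval : (univ.filter (fun i : Fin (N+1) => N + 1 - k ≤ (i:ℕ))).card
          ≤ (Finset.Ico (N+1-k) (N+1)).card := by
        refine Finset.card_le_card_of_injOn (fun i => (i:ℕ)) ?_
          (Function.Injective.injOn Fin.val_injective)
        intro i hi
        simp only [Finset.mem_coe, Finset.mem_Ico]
        exact ⟨(Finset.mem_filter.mp hi).2, i.isLt⟩
      refine le_trans hval ?_
      rw [Nat.card_Ico]
      omega
    calc ((univ.filter _).card : ℝ) * (1/k) ≤ (k:ℝ) * (1/k) := by
          apply mul_le_mul_of_nonneg_right _ (by positivity)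
          exact_mod_cast hcard
    _ = 1 := by field_simp
  set C' : Finset (Fin (N+1)) :=
    univ.filter (fun i : Fin (N+1) => N + 1 - k ≤ (i:ℕ) ∧ Odd ((i:ℕ)+1)) with hC'def
  set pair : Fin (N+1) → Finset (Equiv.Perm (Fin (N+1))) :=
    fun i => {Fin.cycleRange i, (Fin.cycleRange i)⁻¹} with hpairdef
  have hmoves : ∀ (i j : Fin (N+1)), i < j → ∀ y ∈ pair i, y ∉ pair j := by
    intro i j hij y hyi hyj
    have hfix : y j = j := by
      rw [hpairdef] at hyi
      simp only [Finset.mem_insert, Finset.mem_singleton] at hyi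
      rcases hyi with rfl | rfl
      · exact Fin.cycleRange_of_gt hij
      · rw [Equiv.Perm.inv_eq_iff_eq]
        exact (Fin.cycleRange_of_gt hij).symm
    have hmove : y j ≠ j := by
      have hj0 : j ≠ 0 := by
        intro h
        rw [h] at hij
        exact absurd hij (Fin.not_lt_zero i)
      rw [hpairdef] at hyj
      simp only [Finset.mem_insert, Finset.mem_singleton] at hyj
      rcases hyj with rfl | rfl
      · rw [Fin.cycleRange_self]
        exact fun h => hj0 h.symm
      · rw [ne_eq, Equiv.Perm.inv_eq_iff_eq, Fin.cycleRange_self]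
        exact fun h => hj0 h
    exact hmove hfix
  have hpdisj : (C' : Set (Fin (N+1))).PairwiseDisjoint pair := by
    intro i _ j _ hij
    rcases lt_or_gt_of_ne hij with h | h
    · exact Finset.disjoint_left.mpr (fun y hy hy' => hmoves i j h y hy hy')
    · exact Finset.disjoint_right.mpr (fun y hy hy' => hmoves j i h y hy hy')
  have hperi : ∀ i ∈ C', (1/(k:ℝ)) * (4 * nf / ((i:ℕ)+1:ℝ)^2)
      ≤ ∑ y ∈ pair i, qt y * T y := by
    intro i hi
    obtain ⟨-, hik, hodd⟩ : i ∈ univ ∧ N + 1 - k ≤ (i:ℕ) ∧ Odd ((i:ℕ)+1) := by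
      have hmem := Finset.mem_filter.mp hi
      exact ⟨hmem.1, hmem.2.1, hmem.2.2⟩
    set p : Equiv.Perm (Fin (N+1)) := Fin.cycleRange i with hpdef
    have hpow : p ^ ((i:ℕ)+1) = 1 := stmt9_cycleRange_pow_eq_one i
    have hT4 : 4 * nf ≤ (((i:ℕ)+1:ℕ):ℝ)^2 * T p := stmt9_T_ge f p _ hodd hpow
    have hTp : 4 * nf / ((i:ℕ)+1:ℝ)^2 ≤ T p := by
      rw [div_le_iff₀ (by positivity)]
      calc 4 * nf ≤ (((i:ℕ)+1:ℕ):ℝ)^2 * T p := hT4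
      _ = T p * ((i:ℕ)+1:ℝ)^2 := by push_cast; ring
    have htbp : tb p = 1/k := by
      rw [htbdef]
      unfold topToBottom
      rw [if_pos ⟨i, hik, rfl⟩]
    have hpair : (1/(k:ℝ)) * T p ≤ ∑ y ∈ pair i, qt y * T y := by
      by_cases hpp : p = p⁻¹
      · have hps : pair i = {p} := by
          rw [hpairdef]
          simp only [← hpdef, ← hpp]
          exact Finset.insert_eq_self.mpr (Finset.mem_singleton_self p)
        rw [hps, Finset.sum_singleton]
        have hqp : qt p = tb p := by
          rw [hqt p, ← hpp]
          ring
        rw [hqp, htbp]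
      · have hps : pair i = {p, p⁻¹} := by rw [hpairdef, hpdef]
        rw [hps, Finset.sum_pair hpp, hTinv p]
        have hqtsum : qt p + qt p⁻¹ = tb p + tb p⁻¹ := by
          rw [hqt p, hqt p⁻¹, inv_inv]
          ring
        have h1k : (1/(k:ℝ)) ≤ qt p + qt p⁻¹ := by
          rw [hqtsum, htbp]
          linarith [htb_nonneg p⁻¹]
        calc (1/(k:ℝ)) * T p ≤ (qt p + qt p⁻¹) * T p :=
              mul_le_mul_of_nonneg_right h1k (hT_nonneg p)
        _ = qt p * T p + qt p⁻¹ * T p := by ring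
    calc (1/(k:ℝ)) * (4 * nf / ((i:ℕ)+1:ℝ)^2) ≤ (1/(k:ℝ)) * T p :=
          mul_le_mul_of_nonneg_left hTp (by positivity)
    _ ≤ ∑ y ∈ pair i, qt y * T y := hpair
  have hchain : ∑ i ∈ C', (1/(k:ℝ)) * (4 * nf / ((i:ℕ)+1:ℝ)^2) ≤ 2 * nf * (β + Qs) := by
    rw [← hkey]
    calc ∑ i ∈ C', (1/(k:ℝ)) * (4 * nf / ((i:ℕ)+1:ℝ)^2)
        ≤ ∑ i ∈ C', ∑ y ∈ pair i, qt y * T y := Finset.sum_le_sum hperi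
    _ = ∑ y ∈ C'.biUnion pair, qt y * T y := (Finset.sum_biUnion hpdisj).symm
    _ ≤ ∑ y : Equiv.Perm (Fin (N+1)), qt y * T y := by
        refine Finset.sum_le_sum_of_subset_of_nonneg (Finset.subset_univ _) ?_
        exact fun y _ _ => mul_nonneg (hqt_nonneg y) (hT_nonneg y)
  have himg : (Finset.Ico (N+2-k) (N+2)).filter (fun c => Odd c)
      = C'.image (fun i : Fin (N+1) => (i:ℕ)+1) := by
    apply Finset.Subset.antisymm
    · intro c hc
      obtain ⟨hcI, hcO⟩ := Finset.mem_filter.mp hc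
      rw [Finset.mem_Ico] at hcI
      obtain ⟨hcI1, hcI2⟩ := hcI
      have hc1 : 1 ≤ c := by omega
      have hclt : c - 1 < N + 1 := by omega
      refine Finset.mem_image.mpr ⟨⟨c-1, hclt⟩, ?_, ?_⟩
      · refine Finset.mem_filter.mpr ⟨mem_univ _, ?_⟩
        have hmem : N+1-k ≤ c-1 ∧ Odd ((c-1)+1) := by
          refine ⟨by omega, ?_⟩
          rw [Nat.sub_add_cancel hc1]
          exact hcO
        exact hmem
      · show (c-1)+1 = c
        omega
    · intro c hc
      obtain ⟨i, hiC, rfl⟩ := Finset.mem_image.mp hc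
      have hmem := Finset.mem_filter.mp hiC
      have h1 := hmem.2.1
      have h2 := hmem.2.2
      have := i.isLt
      exact Finset.mem_filter.mpr ⟨Finset.mem_Ico.mpr ⟨by omega, by omega⟩, h2⟩
  have hreindex : ∑ c ∈ (Finset.Ico (N+2-k) (N+2)).filter (fun c => Odd c), 1/(c:ℝ)^2
      = ∑ i ∈ C', (1:ℝ)/(((i:ℕ)+1:ℕ):ℝ)^2 := by
    rw [himg]
    refine Finset.sum_image ?_
    intro i _ j _ hij
    exact Fin.val_injective (by simp only at hij; omega)
  have hsumbound : ((1:ℝ)/(((N+2-k:ℕ):ℝ)+1) - 1/(((N+2-k:ℕ):ℝ)+(k:ℝ)))/2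
      ≤ ∑ i ∈ C', (1:ℝ)/(((i:ℕ)+1:ℕ):ℝ)^2 := by
    rw [← hreindex]
    have hod := stmt9_oddsum k (N+2-k) (by omega)
    have hNk : N+2-k+k = N+2 := by omega
    rw [hNk] at hod
    exact hod
  have hm1 : ((N+2-k:ℕ):ℝ) = (N:ℝ) + 2 - (k:ℝ) := by
    push_cast [Nat.cast_sub (by omega : k ≤ N+2)]
    ring
  have hkk : (0:ℝ) < (N:ℝ) + 3 - k := by
    have hc : (k:ℝ) ≤ (N:ℝ)+1 := by exact_mod_cast hkn
    linarith
  have hfinal : ((k:ℝ) - 1) / (k * ((N:ℝ) + 3 - k) * ((N:ℝ) + 2))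
      = (2/(k:ℝ)) * (((1:ℝ)/((N:ℝ)+3-k) - 1/((N:ℝ)+2))/2) := by
    have hN2 : (0:ℝ) < (N:ℝ) + 2 := by positivity
    field_simp
    ring
  have hLHS : (4*nf/k) * ∑ i ∈ C', (1:ℝ)/(((i:ℕ)+1:ℕ):ℝ)^2
      = ∑ i ∈ C', (1/(k:ℝ)) * (4 * nf / ((i:ℕ)+1:ℝ)^2) := by
    rw [Finset.mul_sum]
    refine Finset.sum_congr rfl (fun i _ => ?_)
    push_cast
    ring
  have hA1 : ((N+2-k:ℕ):ℝ)+1 = (N:ℝ)+3-k := by rw [hm1]; ring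
  have hA2 : ((N+2-k:ℕ):ℝ)+(k:ℝ) = (N:ℝ)+2 := by rw [hm1]; ring
  rw [hA1, hA2] at hsumbound
  set X : ℝ := ((1:ℝ)/((N:ℝ)+3-k) - 1/((N:ℝ)+2))/2 with hXdef
  have hstep1 : (4*nf/k) * X ≤ 2 * nf * (β + Qs) := by
    calc (4*nf/k) * X ≤ (4*nf/k) * ∑ i ∈ C', (1:ℝ)/(((i:ℕ)+1:ℕ):ℝ)^2 :=
          mul_le_mul_of_nonneg_left hsumbound (by positivity)
    _ = ∑ i ∈ C', (1/(k:ℝ)) * (4 * nf / ((i:ℕ)+1:ℝ)^2) := hLHS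
    _ ≤ 2 * nf * (β + Qs) := hchain
  have hbQ : (2/(k:ℝ)) * X ≤ β + Qs := by
    have hq : (4*nf/k) * X = 2*nf * ((2/(k:ℝ)) * X) := by
      field_simp
      ring
    rw [hq] at hstep1
    exact le_of_mul_le_mul_left (by linarith [hstep1]) (by linarith : (0:ℝ) < 2*nf)
  have hgoal2 : -1 + ((k:ℝ) - 1) / (k * ((N:ℝ) + 3 - k) * ((N:ℝ) + 2)) ≤ β := by
    rw [hfinal]
    linarith
  have hcast : ((N+1:ℕ):ℝ) - k + 2 = (N:ℝ) + 3 - k := by push_cast; ring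
  have hcast2 : ((N+1:ℕ):ℝ) + 1 = (N:ℝ) + 2 := by push_cast; ring
  rw [hcast, hcast2]
  exact hgoal2
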